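/- Let A and B be finite abelian p-groups with cyclic decompositions A = C_{p^{a₁}} × ⋯ × C_{p^{a_s}} (a₁ ≥ ⋯ ≥ a_s > 0) and B = C_{p^{b₁}} × ⋯ × C_{p^{b_s}} (b₁ ≥ ⋯ ≥ b_s > 0), with b_j ≥ a_j for all j and b_j > a_j for some j. Let t be the smallest index in {1,…,s} such that a_j = b_j for all j with t+1 ≤ j ≤ s. Then for any finite abelian p-group C, |Hom(A, C)| < |Hom(B, C)| if and only if the exponent of C is at least p^{a_t + 1}. -/

import Mathlib

set_option linter.unusedSectionVars false

/-- Homs from a cyclic group `C_n` into a commutative group correspond to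
elements killed by `n`. -/
noncomputable def homCyclicEquiv (n : ℕ) (C : Type*) [CommGroup C] :
    (Multiplicative (ZMod n) →* C) ≃ {c : C // c ^ n = 1} :=
  MonoidHom.toAdditiveRight.trans <|
    (ZMod.lift n).symm.trans <|
      ((zmultiplesHom (Additive C)).subtypeEquiv (fun x => by
        simp [← ofMul_pow, ← ofMul_zpow]
        rfl)).symm.trans (Equiv.refl _)

theorem card_hom_cyclic (n : ℕ) (C : Type*) [CommGroup C] :
    Nat.card (Multiplicative (ZMod n) →* C) = Nat.card {c : C // c ^ n = 1} :=
  Nat.card_congr (homCyclicEquiv n C)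

section Counting

variable {p : ℕ} [hp : Fact p.Prime] {C : Type*} [CommGroup C] [Finite C]

theorem subset_pow_set {m m' : ℕ} (h : m ≤ m') :
    {c : C | c ^ p ^ m = 1} ⊆ {c : C | c ^ p ^ m' = 1} := fun c hc => by
  simp only [Set.mem_setOf_eq, ← orderOf_dvd_iff_pow_eq_one] at *
  exact hc.trans (pow_dvd_pow p h)

theorem pow_card_mono {m m' : ℕ} (h : m ≤ m') :
    Nat.card {c : C // c ^ p ^ m = 1} ≤ Nat.card {c : C // c ^ p ^ m' = 1} := by
  show Set.ncard _ ≤ Set.ncard _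
  exact Set.ncard_le_ncard (subset_pow_set h) (Set.toFinite _)

theorem pow_card_strict (hC : IsPGroup p C) {m : ℕ}
    (hexp : p ^ (m + 1) ≤ Monoid.exponent C) :
    Nat.card {c : C // c ^ p ^ m = 1} < Nat.card {c : C // c ^ p ^ (m + 1) = 1} := by
  show Set.ncard _ < Set.ncard _
  refine Set.ncard_lt_ncard ?_ (Set.toFinite _)
  refine ⟨subset_pow_set m.le_succ, ?_⟩
  have hg : ∃ g : C, g ^ p ^ m ≠ 1 := by
    by_contra hall
    push_neg at hall
    have : Monoid.exponent C ∣ p ^ m := Monoid.exponent_dvd_of_forall_pow_eq_one hall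
    have := Nat.le_of_dvd (pow_pos hp.out.pos m) this
    have hlt : p ^ m < p ^ (m + 1) :=
      Nat.pow_lt_pow_right hp.out.one_lt m.lt_succ_self
    omega
  obtain ⟨g, hg⟩ := hg
  obtain ⟨k, hk⟩ := (IsPGroup.iff_orderOf.mp hC) g
  have hkm : m + 1 ≤ k := by
    by_contra hkm
    push_neg at hkm
    exact hg (orderOf_dvd_iff_pow_eq_one.mp (hk ▸ pow_dvd_pow p (by omega)))
  refine fun hsub => ?_
  set y := g ^ p ^ (k - (m + 1)) with hy
  have hy1 : y ^ p ^ (m + 1) = 1 := by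
    rw [hy, ← pow_mul, ← pow_add, Nat.sub_add_cancel hkm, ← hk, pow_orderOf_eq_one]
  have hy2 : y ^ p ^ m ≠ 1 := by
    rw [hy, ← pow_mul, ← pow_add]
    intro h1
    have := orderOf_dvd_iff_pow_eq_one.mpr h1
    rw [hk] at this
    have := (Nat.pow_dvd_pow_iff_le_right hp.out.one_lt).mp this
    omega
  exact hy2 (hsub hy1)

theorem pow_card_full {m : ℕ} (hexp : Monoid.exponent C ∣ p ^ m) :
    Nat.card {c : C // c ^ p ^ m = 1} = Nat.card C := by
  have : {c : C | c ^ p ^ m = 1} = Set.univ := by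
    ext c
    simp [orderOf_dvd_iff_pow_eq_one.symm.mpr ((Monoid.order_dvd_exponent c).trans hexp)]
  show Set.ncard {c : C | c ^ p ^ m = 1} = _
  rw [this, Set.ncard_univ]

end Counting

/-- Lemma on counting homomorphisms between finite abelian p-groups: with
A = Π C_{p^{a_i}}, B = Π C_{p^{b_i}}, a_i ≤ b_i with strict inequality somewhere,
and t the least index with a_j = b_j for all j > t, we have |Hom(A,C)| < |Hom(B,C)|
iff the exponent of C is at least p^{a_t + 1}. -/
theorem stmt11 {p : ℕ} [Fact p.Prime] {s : ℕ}
    (a b : Fin s → ℕ)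
    (ha_pos : ∀ i, 0 < a i) (hb_pos : ∀ i, 0 < b i)
    (ha_anti : ∀ i j : Fin s, i ≤ j → a j ≤ a i)
    (hb_anti : ∀ i j : Fin s, i ≤ j → b j ≤ b i)
    (hba : ∀ i, a i ≤ b i) (hlt : ∃ i, a i < b i)
    (t : Fin s)
    (ht : ∀ j, t < j → a j = b j)
    (ht_min : ∀ t' : Fin s, (∀ j, t' < j → a j = b j) → t ≤ t')
    (C : Type*) [CommGroup C] [Finite C] (hC : IsPGroup p C) :
    Nat.card ((∀ i, Multiplicative (ZMod (p ^ a i))) →* C) <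
        Nat.card ((∀ i, Multiplicative (ZMod (p ^ b i))) →* C) ↔
      p ^ (a t + 1) ≤ Monoid.exponent C := by
  have hp : p.Prime := Fact.out
  have key : ∀ f : Fin s → ℕ,
      Nat.card ((∀ i, Multiplicative (ZMod (p ^ f i))) →* C) =
        ∏ i, Nat.card {c : C // c ^ p ^ f i = 1} := by
    intro f
    rw [Nat.card_congr
      (Pi.monoidHomMulEquiv (fun i => Multiplicative (ZMod (p ^ f i))) C).toEquiv,
      Nat.card_pi]
    exact Finset.prod_congr rfl fun i _ => card_hom_cyclic _ _
  -- a t < b t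
  have hatbt : a t < b t := by
    rcases (hba t).lt_or_eq with h | heq
    · exact h
    · exfalso
      obtain ⟨i, hi⟩ := hlt
      have hit : i ≤ t := by
        by_contra h'
        push_neg at h'
        exact absurd (ht i h') (Nat.ne_of_lt hi)
      rcases Nat.eq_zero_or_pos t.val with ht0 | ht0
      · have hie : (i : ℕ) ≤ (t : ℕ) := hit
        have hieq : i = t := Fin.ext (by omega)
        rw [hieq] at hi
        omega
      · set t' : Fin s := ⟨t.val - 1, lt_trans (by omega) t.isLt⟩ with ht'
        have hall : ∀ j, t' < j → a j = b j := by
          intro j hj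
          have hj' : t.val - 1 < j.val := hj
          rcases Nat.lt_or_ge t.val j.val with h1 | h1
          · exact ht j h1
          · have : j = t := Fin.ext (by omega)
            rw [this]; exact heq
        have := ht_min t' hall
        have : t.val ≤ t.val - 1 := this
        omega
  -- exponent is a power of p
  obtain ⟨n, hn⟩ := IsPGroup.iff_card.mp hC
  obtain ⟨e, he_le, he⟩ := (Nat.dvd_prime_pow hp).mp (hn ▸ Group.exponent_dvd_nat_card)
  rw [key a, key b]
  constructor
  · -- products < → exponent large; contrapositive
    intro hprod
    by_contra hexp
    have heat : e ≤ a t := by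
      have : ¬ p ^ (a t + 1) ≤ p ^ e := he ▸ hexp
      rw [Nat.pow_le_pow_iff_right hp.one_lt] at this
      omega
    have heq : ∀ i, Nat.card {c : C // c ^ p ^ a i = 1} =
        Nat.card {c : C // c ^ p ^ b i = 1} := by
      intro i
      rcases le_or_gt i t with hit | hti
      · have h1 : Monoid.exponent C ∣ p ^ a i :=
          he ▸ pow_dvd_pow p (le_trans heat (ha_anti i t hit))
        have h2 : Monoid.exponent C ∣ p ^ b i := h1.trans (pow_dvd_pow p (hba i))
        rw [pow_card_full h1, pow_card_full h2]
      · rw [ht i hti]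
    rw [Finset.prod_congr rfl fun i _ => heq i] at hprod
    exact lt_irrefl _ hprod
  · intro hexp
    refine Finset.prod_lt_prod (fun i _ => @Nat.card_pos _ ⟨⟨1, one_pow _⟩⟩ _) (fun i _ => pow_card_mono (hba i))
      ⟨t, Finset.mem_univ t, ?_⟩
    exact lt_of_lt_of_le (pow_card_strict hC hexp) (pow_card_mono hatbt)
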